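/- In the setting of the two reduction orders of R·S·T, prove that C_p = K_p for all 1 ≤ p ≤ n (equivalently c_p = k_p componentwise), i.e., the top rows produced by the left-first reduction ((S·T = A·B, R·A = C·D) giving top row C) and by the right-first reduction ((R·S = G·H, H·T = I·J, G·I = K·L) giving top row K) agree. -/
import Mathlib


open Finset

/-- Partial sum `Φ_p = φ_1 + ⋯ + φ_p` of a multiplicity vector. -/
def PS (f : ℕ → ℕ) (p : ℕ) : ℕ := ∑ i ∈ Finset.Icc 1 p, f i

/-- Partial sums `X_p` of the bumped row in the vector insertion `W·Z = X·Y`: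
`X_0 = X_1 = 0`, `X_{p+1} = min(Z_p, X_p + w_{p+1})`. -/
def capX (W Z : ℕ → ℕ) : ℕ → ℕ
  | 0 => 0
  | p + 1 => if p = 0 then 0 else min (PS Z p) (capX W Z p + W (p + 1))

/-- Component `x_p = X_p - X_{p-1} = min(Z_{p-1} - X_{p-1}, w_p)` (with `x_1 = 0`). -/
def xcomp (W Z : ℕ → ℕ) (p : ℕ) : ℕ := capX W Z p - capX W Z (p - 1)

/-- Component `y_q = w_q + z_q - x_q`. -/
def ycomp (W Z : ℕ → ℕ) (q : ℕ) : ℕ := W q + Z q - xcomp W Z q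

/-- `A` from `S·T = A·B`. -/
def rowA (S T : ℕ → ℕ) : ℕ → ℕ := xcomp S T
/-- `B` from `S·T = A·B`. -/
def rowB (S T : ℕ → ℕ) : ℕ → ℕ := ycomp S T
/-- `C` from `R·A = C·D`. -/
def rowC (R S T : ℕ → ℕ) : ℕ → ℕ := xcomp R (rowA S T)
/-- `D` from `R·A = C·D`. -/
def rowD (R S T : ℕ → ℕ) : ℕ → ℕ := ycomp R (rowA S T)
/-- `E` from `D·B = E·F`. -/
def rowE (R S T : ℕ → ℕ) : ℕ → ℕ := xcomp (rowD R S T) (rowB S T)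
/-- `F` from `D·B = E·F`. -/
def rowF (R S T : ℕ → ℕ) : ℕ → ℕ := ycomp (rowD R S T) (rowB S T)
/-- `G` from `R·S = G·H`. -/
def rowG (R S : ℕ → ℕ) : ℕ → ℕ := xcomp R S
/-- `H` from `R·S = G·H`. -/
def rowH (R S : ℕ → ℕ) : ℕ → ℕ := ycomp R S
/-- `I` from `H·T = I·J`. -/
def rowI (R S T : ℕ → ℕ) : ℕ → ℕ := xcomp (rowH R S) T
/-- `J` from `H·T = I·J`. -/
def rowJ (R S T : ℕ → ℕ) : ℕ → ℕ := ycomp (rowH R S) T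
/-- `K` from `G·I = K·L`. -/
def rowK (R S T : ℕ → ℕ) : ℕ → ℕ := xcomp (rowG R S) (rowI R S T)
/-- `L` from `G·I = K·L`. -/
def rowL (R S T : ℕ → ℕ) : ℕ → ℕ := ycomp (rowG R S) (rowI R S T)



/-! ### Auxiliary lemmas -/

lemma PS_zero (f : ℕ → ℕ) : PS f 0 = 0 := by simp [PS]

lemma PS_succ (f : ℕ → ℕ) (q : ℕ) : PS f (q + 1) = PS f q + f (q + 1) := by
  rw [PS, PS, Finset.sum_Icc_succ_top (by omega)]

lemma PS_mono (f : ℕ → ℕ) {a b : ℕ} (h : a ≤ b) : PS f a ≤ PS f b := by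
  induction b, h using Nat.le_induction with
  | base => exact le_refl _
  | succ b hb ih => rw [PS_succ]; omega

lemma capX_zero (W Z : ℕ → ℕ) : capX W Z 0 = 0 := rfl

lemma capX_one (W Z : ℕ → ℕ) : capX W Z 1 = 0 := by simp [capX]

lemma capX_succ (W Z : ℕ → ℕ) {q : ℕ} (hq : 1 ≤ q) :
    capX W Z (q + 1) = min (PS Z q) (capX W Z q + W (q + 1)) := by
  rw [capX, if_neg (by omega)]

lemma capX_le_Z (W Z : ℕ → ℕ) {q : ℕ} (hq : 1 ≤ q) : capX W Z q ≤ PS Z (q - 1) := by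
  rcases q with _ | q
  · omega
  rcases q with _ | q
  · rw [capX_one]; omega
  · rw [show q + 1 + 1 - 1 = q + 1 from rfl, capX_succ W Z (q := q + 1) (by omega)]
    exact min_le_left _ _

lemma capX_succ_le (W Z : ℕ → ℕ) (q : ℕ) : capX W Z (q + 1) ≤ capX W Z q + W (q + 1) := by
  rcases q with _ | q
  · rw [capX_one]; omega
  · rw [capX_succ W Z (q := q + 1) (by omega)]
    exact min_le_right _ _

lemma capX_mono_succ (W Z : ℕ → ℕ) (q : ℕ) : capX W Z q ≤ capX W Z (q + 1) := by
  rcases q with _ | q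
  · simp [capX_zero]
  · rw [capX_succ W Z (q := q + 1) (by omega)]
    refine le_min ?_ (by omega)
    calc capX W Z (q+1) ≤ PS Z (q + 1 - 1) := capX_le_Z W Z (by omega)
    _ ≤ PS Z (q+1) := PS_mono Z (by omega)

lemma capX_mono (W Z : ℕ → ℕ) {a b : ℕ} (h : a ≤ b) : capX W Z a ≤ capX W Z b := by
  induction b, h using Nat.le_induction with
  | base => exact le_refl _
  | succ b hb ih => exact le_trans ih (capX_mono_succ W Z b)

lemma capX_le_W (W Z : ℕ → ℕ) (q : ℕ) : capX W Z q ≤ PS W q := by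
  induction q with
  | zero => simp [capX_zero, PS_zero]
  | succ q ih =>
    have := capX_succ_le W Z q
    rw [PS_succ]; omega

lemma xcomp_eq (W Z : ℕ → ℕ) (q : ℕ) :
    xcomp W Z (q + 1) + capX W Z q = capX W Z (q + 1) := by
  have h := capX_mono_succ W Z q
  rw [xcomp]; simp; omega

lemma PS_xcomp (W Z : ℕ → ℕ) (q : ℕ) : PS (xcomp W Z) q = capX W Z q := by
  induction q with
  | zero => rw [PS_zero, capX_zero]
  | succ q ih => rw [PS_succ, ih]; have := xcomp_eq W Z q; omega

lemma xcomp_le (W Z : ℕ → ℕ) (q : ℕ) : xcomp W Z (q + 1) ≤ W (q + 1) := by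
  have h1 := xcomp_eq W Z q
  have h2 := capX_succ_le W Z q
  omega

lemma ycomp_eq (W Z : ℕ → ℕ) (q : ℕ) :
    ycomp W Z (q + 1) + xcomp W Z (q + 1) = W (q + 1) + Z (q + 1) := by
  have := xcomp_le W Z q
  rw [ycomp]; omega

lemma PS_ycomp (W Z : ℕ → ℕ) (q : ℕ) :
    PS (ycomp W Z) q + capX W Z q = PS W q + PS Z q := by
  induction q with
  | zero => simp [PS_zero, capX_zero]
  | succ q ih =>
    have h1 := ycomp_eq W Z q
    have h2 := xcomp_eq W Z q
    rw [PS_succ, PS_succ, PS_succ]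
    omega

lemma capX_ub (W Z : ℕ → ℕ) {i q : ℕ} (hi : 1 ≤ i) (hq : i ≤ q) :
    capX W Z q + PS W i ≤ PS Z (i - 1) + PS W q := by
  induction q, hq using Nat.le_induction with
  | base => have := capX_le_Z W Z hi; omega
  | succ q hq ih =>
    have h1 := capX_succ_le W Z q
    have h2 := PS_succ W q
    omega

lemma capX_wit (W Z : ℕ → ℕ) {q : ℕ} (hq : 1 ≤ q) :
    ∃ i, 1 ≤ i ∧ i ≤ q ∧ capX W Z q + PS W i = PS Z (i - 1) + PS W q := by
  induction q, hq using Nat.le_induction with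
  | base => exact ⟨1, le_refl _, le_refl _, by rw [capX_one]; simp [PS_zero]⟩
  | succ q hq ih =>
    obtain ⟨i, hi1, hi2, hi3⟩ := ih
    have h := capX_succ W Z hq
    rcases le_or_gt (PS Z q) (capX W Z q + W (q + 1)) with hc | hc
    · refine ⟨q + 1, by omega, le_refl _, ?_⟩
      rw [h, min_eq_left hc]; simp
    · refine ⟨i, hi1, by omega, ?_⟩
      rw [h, min_eq_right (le_of_lt hc)]
      have := PS_succ W q
      omega

def Dd (R S : ℕ → ℕ) (q : ℕ) : ℤ := (PS R q : ℤ) - (capX R S q : ℤ)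
def vv (R S : ℕ → ℕ) (q : ℕ) : ℤ := (PS S (q - 1) : ℤ) - (PS R q : ℤ)

lemma Dd_nonneg (R S : ℕ → ℕ) (q : ℕ) : 0 ≤ Dd R S q := by
  have := capX_le_W R S q
  unfold Dd; omega

lemma Dd_rec (R S : ℕ → ℕ) {q : ℕ} (hq : 1 ≤ q) :
    Dd R S (q + 1) = max (Dd R S q) (-vv R S (q + 1)) := by
  have h := capX_succ R S hq
  have h2 := PS_succ R q
  unfold Dd vv
  rw [h, show q + 1 - 1 = q from rfl]
  rcases le_or_gt (PS S q) (capX R S q + R (q + 1)) with hc | hc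
  · rw [min_eq_left hc]; omega
  · rw [min_eq_right (le_of_lt hc)]; omega

lemma Dd_ge (R S : ℕ → ℕ) {q : ℕ} (hq : 2 ≤ q) : -vv R S q ≤ Dd R S q := by
  obtain ⟨q', rfl⟩ : ∃ q', q = q' + 1 := ⟨q - 1, by omega⟩
  rw [Dd_rec R S (by omega)]; exact le_max_right _ _

lemma Dd_mono (R S : ℕ → ℕ) {a b : ℕ} (ha : 1 ≤ a) (h : a ≤ b) : Dd R S a ≤ Dd R S b := by
  induction b, h using Nat.le_induction with
  | base => exact le_refl _
  | succ b hb ih =>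
    refine le_trans ih ?_
    rw [Dd_rec R S (by omega)]; exact le_max_left _ _

lemma SL1 (R S : ℕ → ℕ) {j p : ℕ} (hj : 1 ≤ j) (hp : j ≤ p) :
    Dd R S p = Dd R S j ∨
    ∃ q, j < q ∧ q ≤ p ∧ Dd R S (q - 1) = Dd R S j ∧ Dd R S q = -vv R S q := by
  induction p, hp using Nat.le_induction with
  | base => exact Or.inl rfl
  | succ p hp ih =>
    have h := Dd_rec R S (show 1 ≤ p by omega)
    rcases le_or_gt (-vv R S (p + 1)) (Dd R S p) with hc | hc
    · rw [max_eq_left hc] at h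
      rcases ih with h1 | ⟨q, hq1, hq2, hq3, hq4⟩
      · exact Or.inl (h.trans h1)
      · exact Or.inr ⟨q, hq1, by omega, hq3, hq4⟩
    · rw [max_eq_right (le_of_lt hc)] at h
      rcases ih with h1 | ⟨q, hq1, hq2, hq3, hq4⟩
      · exact Or.inr ⟨p + 1, by omega, le_refl _, by rw [show p + 1 - 1 = p from rfl]; exact h1, h⟩
      · exact Or.inr ⟨q, hq1, by omega, hq3, hq4⟩

lemma SL2 (R S : ℕ → ℕ) {j p : ℕ} (hj : 1 ≤ j) (hp : j ≤ p) :
    Dd R S p = Dd R S j ∨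
    ∃ q, j < q ∧ q ≤ p ∧ Dd R S q = Dd R S p ∧ Dd R S q = -vv R S q := by
  induction p, hp using Nat.le_induction with
  | base => exact Or.inl rfl
  | succ p hp ih =>
    have h := Dd_rec R S (show 1 ≤ p by omega)
    rcases le_or_gt (-vv R S (p + 1)) (Dd R S p) with hc | hc
    · rw [max_eq_left hc] at h
      rcases ih with h1 | ⟨q, hq1, hq2, hq3, hq4⟩
      · exact Or.inl (h.trans h1)
      · exact Or.inr ⟨q, hq1, by omega, by rw [h]; exact hq3, hq4⟩
    · rw [max_eq_right (le_of_lt hc)] at h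
      exact Or.inr ⟨p + 1, by omega, le_refl _, rfl, h⟩

lemma M1 (R S : ℕ → ℕ) {j i p : ℕ} (hj : 1 ≤ j) (hji : j < i) (hip : i ≤ p) :
    ∃ i', j < i' ∧ i' ≤ p ∧
      vv R S i' + Dd R S (i' - 1) + Dd R S i' ≤ vv R S i + Dd R S j + Dd R S p := by
  rcases SL1 R S hj (le_trans (le_of_lt hji) hip) with h | ⟨q, hq1, hq2, hq3, hq4⟩
  · refine ⟨i, hji, hip, ?_⟩
    have h1 : Dd R S j ≤ Dd R S (i - 1) := Dd_mono R S hj (by omega)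
    have h2 : Dd R S (i - 1) ≤ Dd R S p := Dd_mono R S (by omega) (by omega)
    have h3 : Dd R S j ≤ Dd R S i := Dd_mono R S hj (by omega)
    have h4 : Dd R S i ≤ Dd R S p := Dd_mono R S (by omega) hip
    omega
  · refine ⟨q, hq1, hq2, ?_⟩
    have h1 : -vv R S i ≤ Dd R S i := Dd_ge R S (by omega)
    have h2 : Dd R S i ≤ Dd R S p := Dd_mono R S (by omega) hip
    omega

lemma M2 (R S : ℕ → ℕ) {j i' p : ℕ} (hj : 1 ≤ j) (hji : j < i') (hip : i' ≤ p) :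
    ∃ i, j < i ∧ i ≤ p ∧
      vv R S i + Dd R S j + Dd R S p ≤ vv R S i' + Dd R S (i' - 1) + Dd R S i' := by
  rcases SL2 R S hj (le_trans (le_of_lt hji) hip) with h | ⟨q, hq1, hq2, hq3, hq4⟩
  · refine ⟨i', hji, hip, ?_⟩
    have h1 : Dd R S j ≤ Dd R S (i' - 1) := Dd_mono R S hj (by omega)
    have h2 : Dd R S (i' - 1) ≤ Dd R S p := Dd_mono R S (by omega) (by omega)
    have h3 : Dd R S j ≤ Dd R S i' := Dd_mono R S hj (by omega)
    have h4 : Dd R S i' ≤ Dd R S p := Dd_mono R S (by omega) hip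
    omega
  · refine ⟨q, hq1, hq2, ?_⟩
    have h1 : -vv R S i' ≤ Dd R S i' := Dd_ge R S (by omega)
    have h2 : Dd R S j ≤ Dd R S (i' - 1) := Dd_mono R S hj (by omega)
    omega

lemma K_le_C (R S T : ℕ → ℕ) {p : ℕ} (hp : 1 ≤ p) :
    capX (rowG R S) (rowI R S T) p ≤ capX R (rowA S T) p := by
  obtain ⟨i, hi1, hi2, hwit⟩ := capX_wit R (rowA S T) hp
  simp only [rowA] at hwit ⊢
  rw [PS_xcomp] at hwit
  rcases eq_or_lt_of_le hi1 with hi1' | hi1'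
  · -- i = 1
    have hKub := capX_ub (rowG R S) (rowI R S T) (le_refl 1) hp
    have hGub := capX_ub R S (le_refl 1) hp
    have e1 : PS (rowG R S) 1 = capX R S 1 := by simp only [rowG]; exact PS_xcomp R S 1
    have e2 : PS (rowG R S) p = capX R S p := by simp only [rowG]; exact PS_xcomp R S p
    have e3 : PS (rowI R S T) (1 - 1) = 0 := PS_zero _
    have e4 : capX R S 1 = 0 := capX_one R S
    have e5 : PS S (1 - 1) = 0 := PS_zero S
    rw [← hi1'] at hwit
    have e6 : capX S T (1 - 1) = 0 := capX_zero S T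
    omega
  · -- 2 ≤ i
    obtain ⟨j, hj1, hj2, hwitA⟩ := capX_wit S T (show 1 ≤ i - 1 by omega)
    obtain ⟨i', hii1, hii2, hM⟩ := M1 R S hj1 (show j < i by omega) hi2
    have hKub := capX_ub (rowG R S) (rowI R S T) (show 1 ≤ i' by omega) hii2
    have hIub := capX_ub (rowH R S) T hj1 (show j ≤ i' - 1 by omega)
    have e1 : PS (rowG R S) i' = capX R S i' := by simp only [rowG]; exact PS_xcomp R S i'
    have e2 : PS (rowG R S) p = capX R S p := by simp only [rowG]; exact PS_xcomp R S p
    have e3 : PS (rowI R S T) (i' - 1) = capX (rowH R S) T (i' - 1) := PS_xcomp _ _ _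
    have e4 : PS (rowH R S) j + capX R S j = PS R j + PS S j := by
      simp only [rowH]; exact PS_ycomp R S j
    have e5 : PS (rowH R S) (i' - 1) + capX R S (i' - 1) = PS R (i' - 1) + PS S (i' - 1) := by
      simp only [rowH]; exact PS_ycomp R S (i' - 1)
    simp only [Dd, vv] at hM
    omega

lemma C_le_K (R S T : ℕ → ℕ) {p : ℕ} (hp : 1 ≤ p) :
    capX R (rowA S T) p ≤ capX (rowG R S) (rowI R S T) p := by
  obtain ⟨i', hi1, hi2, hwit⟩ := capX_wit (rowG R S) (rowI R S T) hp
  have e1 : PS (rowG R S) i' = capX R S i' := by simp only [rowG]; exact PS_xcomp R S i'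
  have e2 : PS (rowI R S T) (i' - 1) = capX (rowH R S) T (i' - 1) := PS_xcomp _ _ _
  have e0 : PS (rowG R S) p = capX R S p := by simp only [rowG]; exact PS_xcomp R S p
  rw [e1, e2, e0] at hwit
  rcases eq_or_lt_of_le hi1 with hi1' | hi1'
  · -- i' = 1 : K p = capX R S p (=G p)
    rw [← hi1'] at hwit
    have e3 : capX R S 1 = 0 := capX_one R S
    have e4 : capX (rowH R S) T (1 - 1) = 0 := rfl
    -- hwit : K p + 0 = 0 + PS rowG p ... careful: e1 was at i'=1
    obtain ⟨a, ha1, ha2, hwitG⟩ := capX_wit R S hp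
    rcases eq_or_lt_of_le ha1 with ha1' | ha1'
    · -- a = 1 : G p = PS R p - PS R 1
      have hCub := capX_ub R (rowA S T) (le_refl 1) hp
      have e5 : PS (rowA S T) (1 - 1) = 0 := PS_zero _
      rw [← ha1'] at hwitG
      have e6 : PS S (1 - 1) = 0 := PS_zero S
      omega
    · -- 2 ≤ a
      have hCub := capX_ub R (rowA S T) (show 1 ≤ a by omega) ha2
      have hAub := capX_ub S T (le_refl 1) (show 1 ≤ a - 1 by omega)
      have e5 : PS (rowA S T) (a - 1) = capX S T (a - 1) := by
        simp only [rowA]; exact PS_xcomp S T (a - 1)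
      have e6 : PS T (1 - 1) = 0 := PS_zero T
      omega
  · -- 2 ≤ i'
    obtain ⟨j, hj1, hj2, hwitI⟩ := capX_wit (rowH R S) T (show 1 ≤ i' - 1 by omega)
    obtain ⟨i, hii1, hii2, hM⟩ := M2 R S hj1 (show j < i' by omega) hi2
    have hCub := capX_ub R (rowA S T) (show 1 ≤ i by omega) hii2
    have hAub := capX_ub S T hj1 (show j ≤ i - 1 by omega)
    have e3 : PS (rowA S T) (i - 1) = capX S T (i - 1) := by
      simp only [rowA]; exact PS_xcomp S T (i - 1)
    have e4 : PS (rowH R S) j + capX R S j = PS R j + PS S j := by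
      simp only [rowH]; exact PS_ycomp R S j
    have e5 : PS (rowH R S) (i' - 1) + capX R S (i' - 1) = PS R (i' - 1) + PS S (i' - 1) := by
      simp only [rowH]; exact PS_ycomp R S (i' - 1)
    simp only [Dd, vv] at hM
    omega

lemma CK (R S T : ℕ → ℕ) (p : ℕ) :
    capX R (rowA S T) p = capX (rowG R S) (rowI R S T) p := by
  rcases Nat.eq_zero_or_pos p with h | h
  · subst h; rfl
  · exact le_antisymm (C_le_K R S T h) (K_le_C R S T h)

/-- The top rows of the two reductions of `R·S·T` agree:
`C_p = K_p` (equivalently, componentwise `c_p = k_p`) for all `1 ≤ p ≤ n`. -/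
theorem C_eq_K (n : ℕ) (R S T : ℕ → ℕ) :
    ∀ p, 1 ≤ p → p ≤ n →
      PS (rowC R S T) p = PS (rowK R S T) p ∧
      rowC R S T p = rowK R S T p := by
  intro p hp hpn
  refine ⟨?_, ?_⟩
  · simp only [rowC, rowK]
    rw [PS_xcomp, PS_xcomp, CK]
  · simp only [rowC, rowK, xcomp]
    rw [CK, CK]
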